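/- For a > 0, the function P₂(x) = Σᵢ [ ((a+1)/a)|xᵢ| - (a+1)|xᵢ|/(a + |xᵢ|) ] is continuously differentiable on ℝⁿ and its gradient is Lipschitz continuous with modulus 2(a+1)/a². -/

import Mathlib

open Real Filter

section aux
variable (a : ℝ)

noncomputable def gg (s : ℝ) : ℝ := (a + 1) * s * (2 * a + |s|) / (a * (a + |s|) ^ 2)

lemma gg_odd (s : ℝ) : gg a (-s) = - gg a s := by
  simp [gg, abs_neg]; ring

lemma gg_zero : gg a 0 = 0 := by simp [gg]

variable {a} (ha : 0 < a)
include ha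

lemma gg_sub (s t : ℝ) (hs : 0 ≤ s) (ht : 0 ≤ t) :
    gg a s - gg a t = (a+1) * a * (s - t) * (2*a + s + t) / ((a+s)^2 * (a+t)^2) := by
  have h1 : a + s > 0 := by linarith
  have h2 : a + t > 0 := by linarith
  rw [gg, gg, abs_of_nonneg hs, abs_of_nonneg ht]
  field_simp
  ring

lemma gg_lip_nonneg (s t : ℝ) (hs : 0 ≤ s) (ht : 0 ≤ t) :
    |gg a s - gg a t| ≤ 2 * (a + 1) / a ^ 2 * |s - t| := by
  have h1 : (0:ℝ) < a + s := by linarith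
  have h2 : (0:ℝ) < a + t := by linarith
  rw [gg_sub ha s t hs ht, abs_div, abs_mul, abs_mul]
  have e1 : |(a+1) * a| = (a+1)*a := abs_of_pos (by nlinarith)
  have e2 : |2*a + s + t| = 2*a + s + t := abs_of_pos (by linarith)
  have e3 : |(a+s)^2 * (a+t)^2| = (a+s)^2 * (a+t)^2 := abs_of_pos (by positivity)
  rw [e1, e2, e3, div_le_iff₀ (by positivity)]
  have hu2 : a^2 ≤ (a+s)^2 := by nlinarith
  have hv2 : a^2 ≤ (a+t)^2 := by nlinarith
  have hu2' : a*(a+s) ≤ (a+s)^2 := by nlinarith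
  have hv2' : a*(a+t) ≤ (a+t)^2 := by nlinarith
  have h3 : a^2*(a*(a+t)) ≤ (a+s)^2*(a+t)^2 :=
    mul_le_mul hu2 hv2' (by positivity) (by positivity)
  have h4 : (a*(a+s))*a^2 ≤ (a+s)^2*(a+t)^2 :=
    mul_le_mul hu2' hv2 (by positivity) (by positivity)
  have key : (a+1) * a * (2*a + s + t) * a^2 ≤ 2 * (a+1) * ((a+s)^2 * (a+t)^2) := by
    nlinarith [h3, h4]
  calc (a+1)*a * |s - t| * (2*a+s+t) = (a+1)*a*(2*a+s+t) * |s-t| := by ring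
    _ ≤ 2*(a+1)*((a+s)^2*(a+t)^2) / a^2 * |s-t| := by
        apply mul_le_mul_of_nonneg_right _ (abs_nonneg _)
        rw [le_div_iff₀ (by positivity)]; linarith [key]
    _ = 2*(a+1)/a^2 * |s-t| * ((a+s)^2*(a+t)^2) := by ring

lemma gg_lip (s t : ℝ) : |gg a s - gg a t| ≤ 2 * (a + 1) / a ^ 2 * |s - t| := by
  have L0 : 0 ≤ 2 * (a+1) / a^2 := by positivity
  rcases le_total 0 s with hs | hs <;> rcases le_total 0 t with ht | ht
  · exact gg_lip_nonneg ha s t hs ht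
  · have b1 : |gg a s| ≤ 2*(a+1)/a^2 * s := by
      have := gg_lip_nonneg ha s 0 hs le_rfl
      simpa [gg_zero, abs_of_nonneg hs] using this
    have b2 : |gg a t| ≤ 2*(a+1)/a^2 * (-t) := by
      have := gg_lip_nonneg ha (-t) 0 (by linarith) le_rfl
      rw [gg_odd, gg_zero, sub_zero, abs_neg, sub_zero, abs_of_nonneg (by linarith : (0:ℝ) ≤ -t)] at this
      exact this
    have : |gg a s - gg a t| ≤ |gg a s| + |gg a t| := abs_sub _ _
    have habs : |s - t| = s - t := abs_of_nonneg (by linarith)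
    rw [habs]; linarith
  · have b1 : |gg a t| ≤ 2*(a+1)/a^2 * t := by
      have := gg_lip_nonneg ha t 0 ht le_rfl
      simpa [gg_zero, abs_of_nonneg ht] using this
    have b2 : |gg a s| ≤ 2*(a+1)/a^2 * (-s) := by
      have := gg_lip_nonneg ha (-s) 0 (by linarith) le_rfl
      rw [gg_odd, gg_zero, sub_zero, abs_neg, sub_zero, abs_of_nonneg (by linarith : (0:ℝ) ≤ -s)] at this
      exact this
    have : |gg a s - gg a t| ≤ |gg a s| + |gg a t| := abs_sub _ _
    have habs : |s - t| = t - s := by rw [abs_sub_comm]; exact abs_of_nonneg (by linarith)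
    rw [habs]; linarith
  · have := gg_lip_nonneg ha (-s) (-t) (by linarith) (by linarith)
    rw [gg_odd, gg_odd] at this
    have e : |-gg a s - -gg a t| = |gg a s - gg a t| := by rw [abs_sub_comm]; ring_nf
    rw [e] at this
    have e2 : |-s - -t| = |s - t| := by rw [abs_sub_comm]; ring_nf
    rwa [e2] at this

lemma ff_eq (s : ℝ) :
    (a + 1) / a * |s| - (a + 1) * |s| / (a + |s|) = (a+1) * s^2 / (a * (a + |s|)) := by
  have h1 : a + |s| > 0 := by positivity
  have : |s| * |s| = s^2 := by rw [← abs_mul, abs_mul_self, sq]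
  field_simp
  nlinarith [this]

lemma hasDerivAt_ff (s : ℝ) :
    HasDerivAt (fun t => (a + 1) / a * |t| - (a + 1) * |t| / (a + |t|)) (gg a s) s := by
  rcases lt_trichotomy s 0 with hs | hs | hs
  · have hev : (fun t => (a + 1) / a * (-t) - (a + 1) * (-t) / (a + -t))
        =ᶠ[nhds s] (fun t => (a + 1) / a * |t| - (a + 1) * |t| / (a + |t|)) := by
      filter_upwards [Iio_mem_nhds hs] with t ht
      rw [abs_of_neg ht]
    have h2 : a + -s > 0 := by linarith
    have hd : HasDerivAt (fun t => (a + 1) / a * (-t) - (a + 1) * (-t) / (a + -t))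
        (gg a s) s := by
      have d1 : HasDerivAt (fun t : ℝ => (a + 1) / a * (-t)) (-((a+1)/a)) s := by
        simpa using ((hasDerivAt_id s).neg.const_mul ((a+1)/a))
      have d2 : HasDerivAt (fun t : ℝ => (a + 1) * (-t)) (-(a+1)) s := by
        simpa using ((hasDerivAt_id s).neg.const_mul (a+1))
      have d3 : HasDerivAt (fun t : ℝ => a + -t) (-1) s := by
        simpa using ((hasDerivAt_id s).neg.const_add a)
      have d4 := d2.div d3 (by linarith)
      have := d1.sub d4
      refine this.congr_deriv ?_
      rw [gg, abs_of_neg hs]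
      field_simp
      ring
    exact hd.congr_of_eventuallyEq hev.symm
  · subst hs
    rw [hasDerivAt_iff_tendsto_slope]
    have hcont : ContinuousAt (fun t : ℝ => (a+1) * t / (a * (a + |t|))) 0 := by
      apply ContinuousAt.div
      · fun_prop
      · fun_prop
      · simp; positivity
    have h0 : (fun t : ℝ => (a+1) * t / (a * (a + |t|))) 0 = 0 := by simp
    have htend : Tendsto (fun t : ℝ => (a+1) * t / (a * (a + |t|))) (nhds 0) (nhds (gg a 0)) := by
      rw [gg_zero]
      simpa [h0] using hcont.tendsto
    refine Tendsto.congr' ?_ (htend.mono_left nhdsWithin_le_nhds)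
    filter_upwards [self_mem_nhdsWithin] with t ht
    have ht' : t ≠ 0 := ht
    rw [slope_def_field]
    simp only [sub_zero, abs_zero, mul_zero, zero_div, sub_zero, div_zero, mul_zero]
    rw [ff_eq ha t]
    field_simp
  · have hev : (fun t => (a + 1) / a * t - (a + 1) * t / (a + t))
        =ᶠ[nhds s] (fun t => (a + 1) / a * |t| - (a + 1) * |t| / (a + |t|)) := by
      filter_upwards [Ioi_mem_nhds hs] with t ht
      rw [abs_of_pos ht]
    have h2 : a + s > 0 := by linarith
    have hd : HasDerivAt (fun t => (a + 1) / a * t - (a + 1) * t / (a + t))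
        (gg a s) s := by
      have d1 : HasDerivAt (fun t : ℝ => (a + 1) / a * t) ((a+1)/a) s := by
        simpa using ((hasDerivAt_id s).const_mul ((a+1)/a))
      have d2 : HasDerivAt (fun t : ℝ => (a + 1) * t) (a+1) s := by
        simpa using ((hasDerivAt_id s).const_mul (a+1))
      have d3 : HasDerivAt (fun t : ℝ => a + t) (1) s := by
        simpa using ((hasDerivAt_id s).const_add a)
      have d4 := d2.div d3 (by linarith)
      have := d1.sub d4
      refine this.congr_deriv ?_
      rw [gg, abs_of_pos hs]
      field_simp
      ring
    exact hd.congr_of_eventuallyEq hev.symm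

end aux



/-- The concave part of the transformed ℓ₁ regularizer is `C¹` with a Lipschitz
gradient with modulus `2(a+1)/a²`. -/
theorem stmt10 {n : ℕ} (a : ℝ) (ha : 0 < a)
    (P₂ : EuclideanSpace ℝ (Fin n) → ℝ)
    (hP₂ : ∀ x, P₂ x = ∑ i, ((a + 1) / a * |x i| - (a + 1) * |x i| / (a + |x i|))) :
    ∃ G : EuclideanSpace ℝ (Fin n) → EuclideanSpace ℝ (Fin n),
      (∀ x, HasGradientAt P₂ (G x) x) ∧ Continuous G ∧
        LipschitzWith (2 * (a + 1) / a ^ 2).toNNReal G := by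
  have hL : (0:ℝ) ≤ 2 * (a + 1) / a ^ 2 := by positivity
  set G : EuclideanSpace ℝ (Fin n) → EuclideanSpace ℝ (Fin n) :=
    fun x => (WithLp.toLp 2 (fun i => gg a (x i)) : EuclideanSpace ℝ (Fin n)) with hG
  have hlip : LipschitzWith (2 * (a + 1) / a ^ 2).toNNReal G := by
    apply LipschitzWith.of_dist_le_mul
    intro x y
    rw [Real.coe_toNNReal _ hL]
    have hdist : dist (G x) (G y) = Real.sqrt (∑ i, dist (gg a (x i)) (gg a (y i)) ^ 2) :=
      EuclideanSpace.dist_eq _ _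
    rw [hdist, EuclideanSpace.dist_eq x y]
    have step1 : ∑ i, dist (gg a (x i)) (gg a (y i)) ^ 2
        ≤ ∑ i, (2 * (a + 1) / a ^ 2 * dist (x i) (y i)) ^ 2 := by
      apply Finset.sum_le_sum
      intro i _
      apply pow_le_pow_left₀ dist_nonneg
      rw [Real.dist_eq, Real.dist_eq]
      exact gg_lip ha (x i) (y i)
    calc Real.sqrt (∑ i, dist (gg a (x i)) (gg a (y i)) ^ 2)
        ≤ Real.sqrt (∑ i, (2 * (a + 1) / a ^ 2 * dist (x i) (y i)) ^ 2) :=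
          Real.sqrt_le_sqrt step1
      _ = Real.sqrt ((2 * (a + 1) / a ^ 2) ^ 2 * ∑ i, dist (x i) (y i) ^ 2) := by
          rw [Finset.mul_sum]
          congr 1
          exact Finset.sum_congr rfl fun i _ => by ring
      _ = 2 * (a + 1) / a ^ 2 * Real.sqrt (∑ i, dist (x i) (y i) ^ 2) := by
          rw [Real.sqrt_mul (sq_nonneg _), Real.sqrt_sq hL]
  refine ⟨G, ?_, hlip.continuous, hlip⟩
  intro x
  have hP : P₂ = fun y : EuclideanSpace ℝ (Fin n) =>
      ∑ i, ((a + 1) / a * |y i| - (a + 1) * |y i| / (a + |y i|)) := funext hP₂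
  rw [hP, hasGradientAt_iff_hasFDerivAt]
  have hcomp : ∀ i : Fin n, HasFDerivAt
      (fun y : EuclideanSpace ℝ (Fin n) => (a + 1) / a * |y i| - (a + 1) * |y i| / (a + |y i|))
      (gg a (x i) • (EuclideanSpace.proj i : EuclideanSpace ℝ (Fin n) →L[ℝ] ℝ)) x := by
    intro i
    have hp : HasFDerivAt (fun y : EuclideanSpace ℝ (Fin n) => y i)
        (EuclideanSpace.proj i : EuclideanSpace ℝ (Fin n) →L[ℝ] ℝ) x :=
      (EuclideanSpace.proj (𝕜 := ℝ) i).hasFDerivAt.congr_of_eventuallyEq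
        (Filter.Eventually.of_forall fun y => rfl)
    exact (hasDerivAt_ff ha (x i)).comp_hasFDerivAt x hp
  have hsum := HasFDerivAt.fun_sum (fun i (_ : i ∈ Finset.univ) => hcomp i)
  refine hsum.congr_fderiv ?_
  apply ContinuousLinearMap.ext
  intro v
  rw [InnerProductSpace.toDual_apply_apply]
  simp [PiLp.inner_apply, RCLike.inner_apply, ContinuousLinearMap.sum_apply, hG,
    PiLp.proj_apply, mul_comm]
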